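/- Fix λ ∈ ℂ and α, β ∈ ℝ, and let y = (y_k) solve a_k y_{k+1} + a_{k−1} y_{k−1} + b_k y_k = λ y_k for k ≥ 1 with y_0 = α, y_1 = β. For T ∈ ℕ define κ^T ∈ ℂ^T by κ^T_t = 𝒯_{T−t}(λ), t = 0,…,T−1. Then the unique control f^T ∈ ℂ^T satisfying W^T f^T = (conj(y_1),…,conj(y_T)) is the unique solution of the Krein equation C^T f^T = β·conj(κ^T) − α·(R^T)* conj(κ^T), where (R^T)* is the Hermitian adjoint of the response matrix R^T. -/
import Mathlib


open scoped BigOperators ComplexConjugate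
open Matrix

/-- Chebyshev polynomials of the second kind (paper normalization), over `ℂ`. -/
def chebC (x : ℂ) : ℕ → ℂ
  | 0 => 0
  | 1 => 1
  | t + 2 => x * chebC x (t + 1) - chebC x t

/-- Solution `u^f` of the semi-infinite dynamical system with real coefficients `a, b`
and complex control `f`. -/
def solSC (a b : ℕ → ℝ) (f : ℕ → ℂ) : ℕ → ℕ → ℂ
  | n, 0 => if n = 0 then f 0 else 0
  | n, 1 =>
      if n = 0 then f 1
      else (a n : ℂ) * solSC a b f (n + 1) 0 + (a (n - 1) : ℂ) * solSC a b f (n - 1) 0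
        + (b n : ℂ) * solSC a b f n 0
  | n, t + 2 =>
      if n = 0 then f (t + 2)
      else (a n : ℂ) * solSC a b f (n + 1) (t + 1) + (a (n - 1) : ℂ) * solSC a b f (n - 1) (t + 1)
        + (b n : ℂ) * solSC a b f n (t + 1) - solSC a b f n t
  termination_by n t => t

/-- Extension of a finite complex control by zero. -/
def ctrlC (T : ℕ) (f : Fin T → ℂ) : ℕ → ℂ := fun t => if h : t < T then f ⟨t, h⟩ else 0

/-- The control `δ = (1,0,0,…)`. -/
def dctrlC : ℕ → ℂ := fun t => if t = 0 then 1 else 0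

/-- The control operator `W^T : ℂ^T → ℂ^T`, `f ↦ (u^f_{1,T},…,u^f_{T,T})`. -/
def WFunC (a b : ℕ → ℝ) (T : ℕ) (f : Fin T → ℂ) : Fin T → ℂ :=
  fun n => solSC a b (ctrlC T f) ((n : ℕ) + 1) T

/-- The control operator `W^T` as a matrix. -/
def WMatC (a b : ℕ → ℝ) (T : ℕ) : Matrix (Fin T) (Fin T) ℂ :=
  Matrix.of fun n j => WFunC a b T (fun k => if k = j then 1 else 0) n

/-- Connecting operator `C^T = (W^T)* W^T`. -/
noncomputable def CMatC (a b : ℕ → ℝ) (T : ℕ) : Matrix (Fin T) (Fin T) ℂ :=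
  (WMatC a b T)ᴴ * WMatC a b T

/-- The response vector: `respC a b t = u^δ_{1,t+1} = r_t`. -/
def respC (a b : ℕ → ℝ) : ℕ → ℂ := fun t => solSC a b dctrlC 1 (t + 1)

/-- The response matrix `R^T`: lower-triangular Toeplitz, `(R^T f)_t = Σ_{s=0}^{t-1} r_{t-1-s} f_s`. -/
def RMatC (a b : ℕ → ℝ) (T : ℕ) : Matrix (Fin T) (Fin T) ℂ :=
  Matrix.of fun t s => if (s : ℕ) < (t : ℕ) then respC a b ((t : ℕ) - (s : ℕ) - 1) else 0

namespace KreinAux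

variable (a b : ℕ → ℝ)

lemma solSC_boundary (f : ℕ → ℂ) (t : ℕ) : solSC a b f 0 t = f t := by
  match t with
  | 0 => rw [solSC]; simp
  | 1 => rw [solSC]; simp
  | (t+2) => conv_lhs => rw [solSC]; simp

lemma solSC_zero (f : ℕ → ℂ) (n : ℕ) (hn : n ≠ 0) : solSC a b f n 0 = 0 := by
  conv_lhs => rw [solSC]
  simp [hn]

lemma solSC_one (f : ℕ → ℂ) (n : ℕ) (hn : n ≠ 0) :
    solSC a b f n 1 = if n = 1 then (a 0 : ℂ) * f 0 else 0 := by
  conv_lhs => rw [solSC]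
  rcases n with _ | _ | n
  · omega
  · simp [solSC_zero, solSC_boundary]
  · simp [solSC_zero]

lemma solSC_step (f : ℕ → ℂ) (n t : ℕ) (hn : n ≠ 0) :
    solSC a b f n (t + 2) =
      (a n : ℂ) * solSC a b f (n + 1) (t + 1) + (a (n - 1) : ℂ) * solSC a b f (n - 1) (t + 1)
        + (b n : ℂ) * solSC a b f n (t + 1) - solSC a b f n t := by
  conv_lhs => rw [solSC]
  simp [hn]

lemma solSC_vanish (f : ℕ → ℂ) : ∀ t n, t < n → solSC a b f n t = 0 := by
  intro t
  induction t using Nat.strong_induction_on with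
  | _ t ih =>
    match t, ih with
    | 0, _ => intro n hn; exact solSC_zero a b f n (by omega)
    | 1, _ => intro n hn; rw [solSC_one a b f n (by omega), if_neg (by omega)]
    | (t+2), ih =>
      intro n hn
      rw [solSC_step a b f n t (by omega),
        ih (t+1) (by omega) (n+1) (by omega), ih (t+1) (by omega) (n-1) (by omega),
        ih (t+1) (by omega) n (by omega), ih t (by omega) n (by omega)]
      ring

lemma solSC_shift (j : ℕ) : ∀ t n, n ≠ 0 →
    solSC a b (fun s => if s = j then 1 else 0) n t = solSC a b dctrlC n (t - j) := by
  by_cases hj : j = 0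
  · subst hj; intro t n _; rfl
  intro t
  induction t using Nat.strong_induction_on with
  | _ t ih =>
    match t, ih with
    | 0, _ =>
      intro n hn
      rw [solSC_zero a b _ n hn, Nat.zero_sub, solSC_zero a b _ n hn]
    | 1, _ =>
      intro n hn
      rw [solSC_one a b _ n hn]
      have h1 : 1 - j = 0 := by omega
      rw [h1, solSC_zero a b _ n hn]
      have h0 : (0:ℕ) ≠ j := fun h => hj h.symm
      simp [h0]
    | (t+2), ih =>
      intro n hn
      rw [solSC_step a b _ n t hn]
      have hA := ih (t+1) (by omega) (n+1) (by omega)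
      have hC := ih (t+1) (by omega) n hn
      have hE := ih t (by omega) n hn
      rcases Nat.lt_or_ge t j with hjt | hjt
      · rcases Nat.eq_or_lt_of_le (Nat.succ_le_of_lt hjt) with hj1 | hj1
        · -- j = t+1
          rw [hA, hC, hE, show t+1-j = 0 by omega, show t-j = 0 by omega,
            solSC_zero a b dctrlC (n+1) (by omega), solSC_zero a b dctrlC n hn,
            show t+2-j = 1 by omega, solSC_one a b dctrlC n hn]
          rcases Nat.eq_zero_or_pos (n-1) with h0 | h0
          · have hn1 : n = 1 := by omega
            subst hn1
            rw [solSC_boundary]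
            simp [dctrlC, ← hj1]
          · rw [ih (t+1) (by omega) (n-1) (by omega), show t+1-j = 0 by omega,
              solSC_zero a b dctrlC (n-1) (by omega), if_neg (show ¬ n = 1 by omega)]
            ring
        · -- j ≥ t+2
          rw [hA, hC, hE, show t+1-j = 0 by omega, show t-j = 0 by omega,
            solSC_zero a b dctrlC (n+1) (by omega), solSC_zero a b dctrlC n hn,
            show t+2-j = 0 by omega, solSC_zero a b dctrlC n hn]
          rcases Nat.eq_zero_or_pos (n-1) with h0 | h0
          · rw [h0, solSC_boundary, if_neg (show ¬ t+1 = j by omega)]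
            ring
          · rw [ih (t+1) (by omega) (n-1) (by omega), show t+1-j = 0 by omega,
              solSC_zero a b dctrlC (n-1) (by omega)]
            ring
      · -- j ≤ t
        have e1 : t + 1 - j = t - j + 1 := by omega
        have hB : (solSC a b (fun s => if s = j then 1 else 0) (n-1) (t+1))
            = solSC a b dctrlC (n-1) (t+1-j) := by
          rcases Nat.eq_zero_or_pos (n-1) with h0 | h0
          · rw [h0, solSC_boundary, solSC_boundary, if_neg (show ¬ t+1 = j by omega), e1]
            simp [dctrlC]
          · exact ih (t+1) (by omega) (n-1) (by omega)
        rw [hA, hB, hC, hE, e1, show t+2-j = t-j+2 by omega,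
          solSC_step a b dctrlC n (t-j) hn]

lemma solSC_add (f g : ℕ → ℂ) : ∀ t n,
    solSC a b (fun s => f s + g s) n t = solSC a b f n t + solSC a b g n t := by
  intro t
  induction t using Nat.strong_induction_on with
  | _ t ih =>
    match t, ih with
    | 0, _ =>
      intro n
      rcases Nat.eq_zero_or_pos n with h | h
      · subst h; rw [solSC_boundary, solSC_boundary, solSC_boundary]
      · rw [solSC_zero a b _ n (by omega), solSC_zero a b _ n (by omega),
          solSC_zero a b _ n (by omega)]; ring
    | 1, _ =>
      intro n
      rcases Nat.eq_zero_or_pos n with h | h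
      · subst h; rw [solSC_boundary, solSC_boundary, solSC_boundary]
      · rw [solSC_one a b _ n (by omega), solSC_one a b _ n (by omega),
          solSC_one a b _ n (by omega)]
        split <;> ring
    | (t+2), ih =>
      intro n
      rcases Nat.eq_zero_or_pos n with h | h
      · subst h; rw [solSC_boundary, solSC_boundary, solSC_boundary]
      · rw [solSC_step a b _ n t (by omega), solSC_step a b _ n t (by omega),
          solSC_step a b _ n t (by omega), ih (t+1) (by omega), ih (t+1) (by omega),
          ih (t+1) (by omega), ih t (by omega)]
        ring

lemma solSC_smul (c : ℂ) (f : ℕ → ℂ) : ∀ t n,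
    solSC a b (fun s => c * f s) n t = c * solSC a b f n t := by
  intro t
  induction t using Nat.strong_induction_on with
  | _ t ih =>
    match t, ih with
    | 0, _ =>
      intro n
      rcases Nat.eq_zero_or_pos n with h | h
      · subst h; rw [solSC_boundary, solSC_boundary]
      · rw [solSC_zero a b _ n (by omega), solSC_zero a b _ n (by omega)]; ring
    | 1, _ =>
      intro n
      rcases Nat.eq_zero_or_pos n with h | h
      · subst h; rw [solSC_boundary, solSC_boundary]
      · rw [solSC_one a b _ n (by omega), solSC_one a b _ n (by omega)]
        split <;> ring
    | (t+2), ih =>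
      intro n
      rcases Nat.eq_zero_or_pos n with h | h
      · subst h; rw [solSC_boundary, solSC_boundary]
      · rw [solSC_step a b _ n t (by omega), solSC_step a b _ n t (by omega),
          ih (t+1) (by omega), ih (t+1) (by omega), ih (t+1) (by omega), ih t (by omega)]
        ring

lemma solSC_zero_ctrl (n t : ℕ) : solSC a b (fun _ => (0:ℂ)) n t = 0 := by
  have h : (fun _ : ℕ => (0:ℂ)) = fun s => (0:ℂ) * dctrlC s := by funext s; simp
  rw [h, solSC_smul, zero_mul]

lemma solSC_finsum {ι : Type*} (s : Finset ι) (F : ι → ℕ → ℂ) (n t : ℕ) :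
    solSC a b (fun u => ∑ i ∈ s, F i u) n t = ∑ i ∈ s, solSC a b (F i) n t := by
  induction s using Finset.cons_induction with
  | empty => simpa using solSC_zero_ctrl a b n t
  | cons i s hi ihs =>
    rw [Finset.sum_cons]
    have h1 : solSC a b (fun u => F i u + ∑ j ∈ s, F j u) n t
        = solSC a b (F i) n t + solSC a b (fun u => ∑ j ∈ s, F j u) n t :=
      solSC_add a b (F i) (fun u => ∑ j ∈ s, F j u) t n
    calc solSC a b (fun u => ∑ j ∈ Finset.cons i s hi, F j u) n t
        = solSC a b (fun u => F i u + ∑ j ∈ s, F j u) n t := by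
          congr 1; funext u; rw [Finset.sum_cons]
      _ = solSC a b (F i) n t + solSC a b (fun u => ∑ j ∈ s, F j u) n t := h1
      _ = _ := by rw [ihs]


variable (a b : ℕ → ℝ)

lemma ctrl_indicator (T : ℕ) (j : Fin T) :
    ctrlC T (fun k => if k = j then 1 else 0) = fun s => if s = (j:ℕ) then (1:ℂ) else 0 := by
  funext s
  unfold ctrlC
  split
  · next h => simp [Fin.ext_iff]
  · next h => rw [if_neg (by omega : ¬ s = (j:ℕ))]

lemma WMatC_apply (T : ℕ) (n j : Fin T) :
    WMatC a b T n j = solSC a b dctrlC ((n:ℕ)+1) (T - (j:ℕ)) := by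
  show WFunC a b T _ n = _
  unfold WFunC
  rw [ctrl_indicator, solSC_shift a b (j:ℕ) T ((n:ℕ)+1) (by omega)]

lemma RMatC_apply (T : ℕ) (u t : Fin T) :
    RMatC a b T u t = solSC a b dctrlC 1 ((u:ℕ) - (t:ℕ)) := by
  show (if (t:ℕ) < (u:ℕ) then respC a b ((u:ℕ) - (t:ℕ) - 1) else 0) = _
  split
  · next h => unfold respC; congr 1; omega
  · next h =>
    rw [show (u:ℕ) - (t:ℕ) = 0 by omega, solSC_zero a b dctrlC 1 (by omega)]

lemma ctrl_decomp (T : ℕ) (g : Fin T → ℂ) :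
    ctrlC T g = fun s => ∑ j : Fin T, g j * (if s = (j:ℕ) then 1 else 0) := by
  funext s
  unfold ctrlC
  split
  · next h =>
    rw [Finset.sum_eq_single (⟨s, h⟩ : Fin T)]
    · simp
    · intro j _ hj
      rw [if_neg (fun hs => hj (by exact (Fin.ext hs.symm))), mul_zero]
    · intro hmem; exact absurd (Finset.mem_univ _) hmem
  · next h =>
    refine (Finset.sum_eq_zero fun j _ => ?_).symm
    rw [if_neg (by omega : ¬ s = (j:ℕ)), mul_zero]

lemma WFunC_mulVec (T : ℕ) (g : Fin T → ℂ) : WFunC a b T g = (WMatC a b T).mulVec g := by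
  funext n
  show solSC a b (ctrlC T g) ((n:ℕ)+1) T = _
  rw [ctrl_decomp]
  have h1 : solSC a b (fun s => ∑ j : Fin T, g j * (if s = (j:ℕ) then 1 else 0)) ((n:ℕ)+1) T
      = ∑ j : Fin T, solSC a b (fun s => g j * (if s = (j:ℕ) then 1 else 0)) ((n:ℕ)+1) T :=
    solSC_finsum a b Finset.univ (fun j s => g j * (if s = (j:ℕ) then 1 else 0)) _ _
  rw [h1]
  unfold Matrix.mulVec dotProduct
  refine Finset.sum_congr rfl fun j _ => ?_
  rw [solSC_smul a b (g j) (fun s => if s = (j:ℕ) then 1 else 0) T ((n:ℕ)+1),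
    solSC_shift a b (j:ℕ) T ((n:ℕ)+1) (by omega)]
  beta_reduce
  rw [WMatC_apply]
  ring

lemma D_diag : ∀ n : ℕ, solSC a b dctrlC (n+1) (n+1) = ∏ k ∈ Finset.range (n+1), (a k : ℂ) := by
  intro n
  induction n with
  | zero =>
    rw [solSC_one a b dctrlC 1 (by omega), if_pos rfl]
    simp [dctrlC]
  | succ n ihn =>
    rw [show n+1+1 = (n+1)+1 by rfl]
    rw [solSC_step a b dctrlC (n+2) n (by omega),
      solSC_vanish a b dctrlC (n+1) (n+3) (by omega),
      solSC_vanish a b dctrlC (n+1) (n+2) (by omega),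
      solSC_vanish a b dctrlC n (n+2) (by omega)]
    rw [show n+2-1 = n+1 by omega, ihn]
    conv_rhs => rw [Finset.prod_range_succ]
    ring

lemma WMatC_det_ne_zero (hapos : ∀ n, 0 < a n) (T : ℕ) : (WMatC a b T).det ≠ 0 := by
  set M : Matrix (Fin T) (Fin T) ℂ := (WMatC a b T).submatrix id Fin.rev with hMdef
  have hMe : ∀ i j : Fin T, M i j = solSC a b dctrlC ((i:ℕ)+1) ((j:ℕ)+1) := by
    intro i j
    rw [hMdef, Matrix.submatrix_apply, id, WMatC_apply]
    congr 1
    rw [Fin.val_rev]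
    omega
  have hMtri : M.BlockTriangular id := by
    intro i j hij
    rw [hMe, solSC_vanish a b dctrlC ((j:ℕ)+1) ((i:ℕ)+1) (by have h2 : (j:ℕ) < (i:ℕ) := hij; omega)]
  have hMdet : M.det ≠ 0 := by
    rw [Matrix.det_of_upperTriangular hMtri]
    refine Finset.prod_ne_zero_iff.mpr fun i _ => ?_
    rw [hMe, D_diag]
    refine Finset.prod_ne_zero_iff.mpr fun k _ => ?_
    exact_mod_cast ne_of_gt (hapos k)
  have hWM : WMatC a b T = M.submatrix id Fin.rev := by
    funext i j
    rw [Matrix.submatrix_apply, hMdef, Matrix.submatrix_apply, id, id, Fin.rev_rev]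
  rw [hWM]
  have : (M.submatrix id Fin.rev) = M.submatrix id (⇑(Fin.revPerm : Equiv.Perm (Fin T))) := rfl
  rw [this, Matrix.det_permute']
  refine mul_ne_zero ?_ hMdet
  rcases Int.units_eq_one_or (Equiv.Perm.sign (Fin.revPerm : Equiv.Perm (Fin T))) with h | h <;>
    rw [h] <;> norm_num


variable (a b : ℕ → ℝ)

lemma key_sum (ha0 : a 0 = 1) (lam : ℂ) (alpha beta : ℝ) (y : ℕ → ℂ)
    (hy0 : y 0 = (alpha : ℂ)) (hy1 : y 1 = (beta : ℂ))
    (hy : ∀ k : ℕ, 1 ≤ k →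
      (a k : ℂ) * y (k + 1) + (a (k - 1) : ℂ) * y (k - 1) + (b k : ℂ) * y k = lam * y k) :
    ∀ m : ℕ, ∑ n ∈ Finset.range m, solSC a b dctrlC (n+1) m * y (n+1)
      = (beta:ℂ) * chebC lam m
        - (alpha:ℂ) * ∑ v ∈ Finset.range m, solSC a b dctrlC 1 (v+1) * chebC lam (m-1-v) := by
  intro m
  induction m using Nat.strong_induction_on with
  | _ m ih =>
    match m, ih with
    | 0, _ => simp [show chebC lam 0 = 0 from rfl]
    | 1, _ =>
      rw [Finset.sum_range_one, Finset.sum_range_one,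
        solSC_one a b dctrlC 1 (by omega), if_pos rfl]
      simp [dctrlC, show chebC lam 1 = 1 from rfl, show chebC lam 0 = 0 from rfl, hy1, ha0]
    | (m+2), ih =>
      -- expand the left side via the dynamical recursion
      have hstep : ∀ n ∈ Finset.range (m+2),
          solSC a b dctrlC (n+1) (m+2) * y (n+1)
            = ((a (n+1) : ℂ) * solSC a b dctrlC (n+2) (m+1) * y (n+1)
              + (a n : ℂ) * solSC a b dctrlC n (m+1) * y (n+1)
              + (b (n+1) : ℂ) * solSC a b dctrlC (n+1) (m+1) * y (n+1))
              - solSC a b dctrlC (n+1) m * y (n+1) := by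
        intro n _
        rw [solSC_step a b dctrlC (n+1) m (by omega), show n+1-1 = n by omega]
        ring
      have hLHS : ∑ n ∈ Finset.range (m+2), solSC a b dctrlC (n+1) (m+2) * y (n+1)
          = (∑ n ∈ Finset.range (m+2), (a (n+1):ℂ) * solSC a b dctrlC (n+2) (m+1) * y (n+1))
            + (∑ n ∈ Finset.range (m+2), (a n:ℂ) * solSC a b dctrlC n (m+1) * y (n+1))
            + (∑ n ∈ Finset.range (m+2), (b (n+1):ℂ) * solSC a b dctrlC (n+1) (m+1) * y (n+1))
            - ∑ n ∈ Finset.range (m+2), solSC a b dctrlC (n+1) m * y (n+1) := by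
        rw [Finset.sum_congr rfl hstep, Finset.sum_sub_distrib, Finset.sum_add_distrib,
          Finset.sum_add_distrib]
      -- sum A
      have hSA : ∑ n ∈ Finset.range (m+2), (a (n+1):ℂ) * solSC a b dctrlC (n+2) (m+1) * y (n+1)
          = (∑ k ∈ Finset.range (m+1), (a k:ℂ) * solSC a b dctrlC (k+1) (m+1) * y k)
            - (a 0:ℂ) * solSC a b dctrlC 1 (m+1) * y 0 := by
        have h1 : ∑ k ∈ Finset.range (m+2), (a k:ℂ) * solSC a b dctrlC (k+1) (m+1) * y k
            = (∑ k ∈ Finset.range (m+1), (a (k+1):ℂ) * solSC a b dctrlC (k+2) (m+1) * y (k+1))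
              + (a 0:ℂ) * solSC a b dctrlC 1 (m+1) * y 0 :=
          Finset.sum_range_succ' (fun k => (a k:ℂ) * solSC a b dctrlC (k+1) (m+1) * y k) (m+1)
        have h2 : ∑ k ∈ Finset.range (m+2), (a k:ℂ) * solSC a b dctrlC (k+1) (m+1) * y k
            = (∑ k ∈ Finset.range (m+1), (a k:ℂ) * solSC a b dctrlC (k+1) (m+1) * y k)
              + (a (m+1):ℂ) * solSC a b dctrlC (m+2) (m+1) * y (m+1) :=
          Finset.sum_range_succ (fun k => (a k:ℂ) * solSC a b dctrlC (k+1) (m+1) * y k) (m+1)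
        have h3 : ∑ n ∈ Finset.range (m+2), (a (n+1):ℂ) * solSC a b dctrlC (n+2) (m+1) * y (n+1)
            = (∑ n ∈ Finset.range (m+1), (a (n+1):ℂ) * solSC a b dctrlC (n+2) (m+1) * y (n+1))
              + (a (m+2):ℂ) * solSC a b dctrlC (m+3) (m+1) * y (m+2) :=
          Finset.sum_range_succ (fun n => (a (n+1):ℂ) * solSC a b dctrlC (n+2) (m+1) * y (n+1)) (m+1)
        rw [h2] at h1
        rw [h3, solSC_vanish a b dctrlC (m+1) (m+3) (by omega)]
        rw [solSC_vanish a b dctrlC (m+1) (m+2) (by omega)] at h1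
        linear_combination -h1
      -- sum B
      have hSB : ∑ n ∈ Finset.range (m+2), (a n:ℂ) * solSC a b dctrlC n (m+1) * y (n+1)
          = ∑ k ∈ Finset.range (m+1), (a (k+1):ℂ) * solSC a b dctrlC (k+1) (m+1) * y (k+2) := by
        have h1 : ∑ n ∈ Finset.range (m+2), (a n:ℂ) * solSC a b dctrlC n (m+1) * y (n+1)
            = (∑ k ∈ Finset.range (m+1), (a (k+1):ℂ) * solSC a b dctrlC (k+1) (m+1) * y (k+2))
              + (a 0:ℂ) * solSC a b dctrlC 0 (m+1) * y 1 :=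
          Finset.sum_range_succ' (fun n => (a n:ℂ) * solSC a b dctrlC n (m+1) * y (n+1)) (m+1)
        rw [h1, solSC_boundary, show dctrlC (m+1) = 0 from if_neg (by omega)]
        ring
      -- sum C
      have hSC : ∑ n ∈ Finset.range (m+2), (b (n+1):ℂ) * solSC a b dctrlC (n+1) (m+1) * y (n+1)
          = ∑ k ∈ Finset.range (m+1), (b (k+1):ℂ) * solSC a b dctrlC (k+1) (m+1) * y (k+1) := by
        have h1 : ∑ n ∈ Finset.range (m+2), (b (n+1):ℂ) * solSC a b dctrlC (n+1) (m+1) * y (n+1)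
            = (∑ n ∈ Finset.range (m+1), (b (n+1):ℂ) * solSC a b dctrlC (n+1) (m+1) * y (n+1))
              + (b (m+2):ℂ) * solSC a b dctrlC (m+2) (m+1) * y (m+2) :=
          Finset.sum_range_succ (fun n => (b (n+1):ℂ) * solSC a b dctrlC (n+1) (m+1) * y (n+1)) (m+1)
        rw [h1, solSC_vanish a b dctrlC (m+1) (m+2) (by omega)]
        ring
      -- sum E
      have hSE : ∑ n ∈ Finset.range (m+2), solSC a b dctrlC (n+1) m * y (n+1)
          = ∑ n ∈ Finset.range m, solSC a b dctrlC (n+1) m * y (n+1) := by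
        have h1 : ∑ n ∈ Finset.range (m+2), solSC a b dctrlC (n+1) m * y (n+1)
            = (∑ n ∈ Finset.range (m+1), solSC a b dctrlC (n+1) m * y (n+1))
              + solSC a b dctrlC (m+2) m * y (m+2) :=
          Finset.sum_range_succ (fun n => solSC a b dctrlC (n+1) m * y (n+1)) (m+1)
        have h2 : ∑ n ∈ Finset.range (m+1), solSC a b dctrlC (n+1) m * y (n+1)
            = (∑ n ∈ Finset.range m, solSC a b dctrlC (n+1) m * y (n+1))
              + solSC a b dctrlC (m+1) m * y (m+1) :=
          Finset.sum_range_succ (fun n => solSC a b dctrlC (n+1) m * y (n+1)) m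
        rw [h1, h2, solSC_vanish a b dctrlC m (m+1) (by omega),
          solSC_vanish a b dctrlC m (m+2) (by omega)]
        ring
      -- combine A + B + C using the three-term recurrence for y
      have hcomb : (∑ k ∈ Finset.range (m+1), (a k:ℂ) * solSC a b dctrlC (k+1) (m+1) * y k)
            + (∑ k ∈ Finset.range (m+1), (a (k+1):ℂ) * solSC a b dctrlC (k+1) (m+1) * y (k+2))
            + (∑ k ∈ Finset.range (m+1), (b (k+1):ℂ) * solSC a b dctrlC (k+1) (m+1) * y (k+1))
          = lam * ∑ k ∈ Finset.range (m+1), solSC a b dctrlC (k+1) (m+1) * y (k+1) := by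
        rw [← Finset.sum_add_distrib, ← Finset.sum_add_distrib, Finset.mul_sum]
        refine Finset.sum_congr rfl fun k _ => ?_
        have hk := hy (k+1) (by omega)
        rw [show k+1-1 = k by omega] at hk
        have hy3 : (a k:ℂ) * y k + (a (k+1):ℂ) * y (k+2) + (b (k+1):ℂ) * y (k+1)
            = lam * y (k+1) := by rw [← hk]; ring
        calc (a k:ℂ) * solSC a b dctrlC (k+1) (m+1) * y k
              + (a (k+1):ℂ) * solSC a b dctrlC (k+1) (m+1) * y (k+2)
              + (b (k+1):ℂ) * solSC a b dctrlC (k+1) (m+1) * y (k+1)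
            = solSC a b dctrlC (k+1) (m+1)
                * ((a k:ℂ) * y k + (a (k+1):ℂ) * y (k+2) + (b (k+1):ℂ) * y (k+1)) := by ring
          _ = lam * (solSC a b dctrlC (k+1) (m+1) * y (k+1)) := by rw [hy3]; ring
      -- the Chebyshev-sum recurrence
      have hGstep : ∀ v ∈ Finset.range m, solSC a b dctrlC 1 (v+1) * chebC lam (m+1-v)
          = lam * (solSC a b dctrlC 1 (v+1) * chebC lam (m-v))
            - solSC a b dctrlC 1 (v+1) * chebC lam (m-1-v) := by
        intro v hv
        rw [Finset.mem_range] at hv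
        obtain ⟨k, hk⟩ : ∃ k, m-1-v = k := ⟨_, rfl⟩
        rw [hk, show m+1-v = k+2 by omega, show m-v = k+1 by omega,
          show chebC lam (k+2) = lam * chebC lam (k+1) - chebC lam k from rfl]
        ring
      have hG : ∑ v ∈ Finset.range (m+2), solSC a b dctrlC 1 (v+1) * chebC lam (m+2-1-v)
          = lam * (∑ v ∈ Finset.range (m+1), solSC a b dctrlC 1 (v+1) * chebC lam (m+1-1-v))
            - (∑ v ∈ Finset.range m, solSC a b dctrlC 1 (v+1) * chebC lam (m-1-v))
            + solSC a b dctrlC 1 (m+1) := by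
        have e0 : ∀ v ∈ Finset.range (m+2), solSC a b dctrlC 1 (v+1) * chebC lam (m+2-1-v)
            = solSC a b dctrlC 1 (v+1) * chebC lam (m+1-v) := fun v _ => rfl
        have e1 : ∀ v ∈ Finset.range (m+1), solSC a b dctrlC 1 (v+1) * chebC lam (m+1-1-v)
            = solSC a b dctrlC 1 (v+1) * chebC lam (m-v) := fun v _ => rfl
        have hL1 : ∑ v ∈ Finset.range (m+2), solSC a b dctrlC 1 (v+1) * chebC lam (m+1-v)
            = (∑ v ∈ Finset.range (m+1), solSC a b dctrlC 1 (v+1) * chebC lam (m+1-v))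
              + solSC a b dctrlC 1 (m+2) * chebC lam (m+1-(m+1)) :=
          Finset.sum_range_succ (fun v => solSC a b dctrlC 1 (v+1) * chebC lam (m+1-v)) (m+1)
        have hL2 : ∑ v ∈ Finset.range (m+1), solSC a b dctrlC 1 (v+1) * chebC lam (m+1-v)
            = (∑ v ∈ Finset.range m, solSC a b dctrlC 1 (v+1) * chebC lam (m+1-v))
              + solSC a b dctrlC 1 (m+1) * chebC lam (m+1-m) :=
          Finset.sum_range_succ (fun v => solSC a b dctrlC 1 (v+1) * chebC lam (m+1-v)) m
        have hR1 : ∑ v ∈ Finset.range (m+1), solSC a b dctrlC 1 (v+1) * chebC lam (m-v)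
            = (∑ v ∈ Finset.range m, solSC a b dctrlC 1 (v+1) * chebC lam (m-v))
              + solSC a b dctrlC 1 (m+1) * chebC lam (m-m) :=
          Finset.sum_range_succ (fun v => solSC a b dctrlC 1 (v+1) * chebC lam (m-v)) m
        rw [Finset.sum_congr rfl e0, Finset.sum_congr rfl e1, hL1, hL2, hR1,
          Finset.sum_congr rfl hGstep, Finset.sum_sub_distrib, ← Finset.mul_sum,
          show m+1-(m+1) = 0 by omega, show m+1-m = 1 by omega, show m-m = 0 by omega,
          show chebC lam 0 = 0 from rfl, show chebC lam 1 = 1 from rfl]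
        ring
      -- put everything together
      have hc : chebC lam (m+2) = lam * chebC lam (m+1) - chebC lam m := rfl
      have ha0' : ((a 0 : ℝ) : ℂ) = 1 := by rw [ha0]; norm_num
      rw [hLHS, hSA, hSB, hSC, hSE]
      linear_combination hcomb + lam * ih (m+1) (by omega) - ih m (by omega)
        - (beta:ℂ) * hc + (alpha:ℂ) * hG
        - solSC a b dctrlC 1 (m+1) * y 0 * ha0' - solSC a b dctrlC 1 (m+1) * hy0


variable (a b : ℕ → ℝ)

lemma core_identity (ha0 : a 0 = 1) (lam : ℂ) (alpha beta : ℝ) (y : ℕ → ℂ)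
    (hy0 : y 0 = (alpha : ℂ)) (hy1 : y 1 = (beta : ℂ))
    (hy : ∀ k : ℕ, 1 ≤ k →
      (a k : ℂ) * y (k + 1) + (a (k - 1) : ℂ) * y (k - 1) + (b k : ℂ) * y k = lam * y k)
    (T : ℕ) (t : Fin T) :
    ∑ n : Fin T, WMatC a b T n t * y ((n:ℕ)+1)
      = (beta:ℂ) * chebC lam (T - (t:ℕ))
        - (alpha:ℂ) * ∑ u : Fin T, RMatC a b T u t * chebC lam (T - (u:ℕ)) := by
  have ht : (t:ℕ) < T := t.isLt
  obtain ⟨m, hmT⟩ : ∃ m, T = (t:ℕ) + m := ⟨T - (t:ℕ), by omega⟩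
  have hm1 : 1 ≤ m := by omega
  rw [show T - (t:ℕ) = m by omega]
  -- left side
  have hW : ∀ n : Fin T, WMatC a b T n t * y ((n:ℕ)+1)
      = solSC a b dctrlC ((n:ℕ)+1) m * y ((n:ℕ)+1) := by
    intro n
    rw [WMatC_apply, show T - (t:ℕ) = m by omega]
  have hL1 : ∑ n : Fin T, WMatC a b T n t * y ((n:ℕ)+1)
      = ∑ n ∈ Finset.range T, solSC a b dctrlC (n+1) m * y (n+1) := by
    rw [Finset.sum_congr rfl (fun n _ => hW n)]
    exact Fin.sum_univ_eq_sum_range (fun k => solSC a b dctrlC (k+1) m * y (k+1)) T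
  have hL2 : ∑ n ∈ Finset.range T, solSC a b dctrlC (n+1) m * y (n+1)
      = ∑ n ∈ Finset.range m, solSC a b dctrlC (n+1) m * y (n+1) := by
    symm
    refine Finset.sum_subset (Finset.range_subset_range.mpr (by omega)) ?_
    intro x hx hnx
    rw [Finset.mem_range] at hnx
    rw [solSC_vanish a b dctrlC m (x+1) (by omega), zero_mul]
  -- right side
  have hR : ∀ u : Fin T, RMatC a b T u t * chebC lam (T - (u:ℕ))
      = solSC a b dctrlC 1 ((u:ℕ) - (t:ℕ)) * chebC lam (T - (u:ℕ)) := by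
    intro u; rw [RMatC_apply]
  have hR1 : ∑ u : Fin T, RMatC a b T u t * chebC lam (T - (u:ℕ))
      = ∑ u ∈ Finset.range T, solSC a b dctrlC 1 (u - (t:ℕ)) * chebC lam (T - u) := by
    rw [Finset.sum_congr rfl (fun u _ => hR u)]
    exact Fin.sum_univ_eq_sum_range (fun u => solSC a b dctrlC 1 (u - (t:ℕ)) * chebC lam (T - u)) T
  have hR2 : ∑ u ∈ Finset.range T, solSC a b dctrlC 1 (u - (t:ℕ)) * chebC lam (T - u)
      = (∑ u ∈ Finset.range ((t:ℕ)+1), solSC a b dctrlC 1 (u - (t:ℕ)) * chebC lam (T - u))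
        + ∑ i ∈ Finset.range (m-1),
            solSC a b dctrlC 1 (((t:ℕ)+1+i) - (t:ℕ)) * chebC lam (T - ((t:ℕ)+1+i)) := by
    obtain ⟨s, hs⟩ : ∃ s, (t:ℕ) = s := ⟨_, rfl⟩
    rw [hs, show T = (s+1) + (m-1) by omega]
    exact Finset.sum_range_add _ _ _
  have hR3 : ∑ u ∈ Finset.range ((t:ℕ)+1), solSC a b dctrlC 1 (u - (t:ℕ)) * chebC lam (T - u)
      = 0 := by
    refine Finset.sum_eq_zero fun u hu => ?_
    rw [Finset.mem_range] at hu
    rw [show u - (t:ℕ) = 0 by omega, solSC_zero a b dctrlC 1 (by omega), zero_mul]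
  have hR4 : ∑ i ∈ Finset.range (m-1),
        solSC a b dctrlC 1 (((t:ℕ)+1+i) - (t:ℕ)) * chebC lam (T - ((t:ℕ)+1+i))
      = ∑ i ∈ Finset.range (m-1), solSC a b dctrlC 1 (i+1) * chebC lam (m-1-i) := by
    refine Finset.sum_congr rfl fun i _ => ?_
    rw [show ((t:ℕ)+1+i) - (t:ℕ) = i+1 by omega, show T - ((t:ℕ)+1+i) = m-1-i by omega]
  have hR5 : ∑ v ∈ Finset.range m, solSC a b dctrlC 1 (v+1) * chebC lam (m-1-v)
      = ∑ i ∈ Finset.range (m-1), solSC a b dctrlC 1 (i+1) * chebC lam (m-1-i) := by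
    obtain ⟨k, hk⟩ : ∃ k, m = k+1 := ⟨m-1, by omega⟩
    subst hk
    have h6 : ∑ v ∈ Finset.range (k+1), solSC a b dctrlC 1 (v+1) * chebC lam (k+1-1-v)
        = (∑ v ∈ Finset.range k, solSC a b dctrlC 1 (v+1) * chebC lam (k+1-1-v))
          + solSC a b dctrlC 1 (k+1) * chebC lam (k+1-1-k) :=
      Finset.sum_range_succ (fun v => solSC a b dctrlC 1 (v+1) * chebC lam (k+1-1-v)) k
    rw [h6, show k+1-1-k = 0 by omega, show chebC lam 0 = 0 from rfl, mul_zero, add_zero,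
      show k+1-1 = k by omega]
  rw [hL1, hL2, hR1, hR2, hR3, hR4, ← hR5, zero_add,
    key_sum a b ha0 lam alpha beta y hy0 hy1 hy m]

lemma wstar_identity (ha0 : a 0 = 1) (lam : ℂ) (alpha beta : ℝ) (y : ℕ → ℂ)
    (hy0 : y 0 = (alpha : ℂ)) (hy1 : y 1 = (beta : ℂ))
    (hy : ∀ k : ℕ, 1 ≤ k →
      (a k : ℂ) * y (k + 1) + (a (k - 1) : ℂ) * y (k - 1) + (b k : ℂ) * y k = lam * y k)
    (T : ℕ) :
    (WMatC a b T)ᴴ.mulVec (fun n : Fin T => conj (y ((n:ℕ)+1)))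
      = fun t : Fin T =>
          (beta : ℂ) * conj (chebC lam (T - (t : ℕ)))
            - (alpha : ℂ) *
              ((RMatC a b T)ᴴ.mulVec (fun u : Fin T => conj (chebC lam (T - (u : ℕ))))) t := by
  funext t
  have hcore := core_identity a b ha0 lam alpha beta y hy0 hy1 hy T t
  have hL : ((WMatC a b T)ᴴ.mulVec (fun n : Fin T => conj (y ((n:ℕ)+1)))) t
      = conj (∑ n : Fin T, WMatC a b T n t * y ((n:ℕ)+1)) := by
    rw [map_sum]
    unfold Matrix.mulVec dotProduct
    refine Finset.sum_congr rfl fun n _ => ?_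
    show (WMatC a b T)ᴴ t n * conj (y ((n:ℕ)+1)) = conj (WMatC a b T n t * y ((n:ℕ)+1))
    rw [Matrix.conjTranspose_apply, _root_.map_mul]
    rfl
  have hRm : ((RMatC a b T)ᴴ.mulVec (fun u : Fin T => conj (chebC lam (T - (u:ℕ))))) t
      = conj (∑ u : Fin T, RMatC a b T u t * chebC lam (T - (u:ℕ))) := by
    rw [map_sum]
    unfold Matrix.mulVec dotProduct
    refine Finset.sum_congr rfl fun u _ => ?_
    show (RMatC a b T)ᴴ t u * conj (chebC lam (T - (u:ℕ))) = conj (RMatC a b T u t * chebC lam (T - (u:ℕ)))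
    rw [Matrix.conjTranspose_apply, _root_.map_mul]
    rfl
  rw [hL, hRm, hcore, _root_.map_sub, _root_.map_mul, _root_.map_mul, Complex.conj_ofReal, Complex.conj_ofReal]

end KreinAux

/-- Krein equations: the unique control `f^T` with
`W^T f^T = (conj y_1,…,conj y_T)` is the unique solution of
`C^T f^T = β conj(κ^T) − α (R^T)* conj(κ^T)`, where `κ^T_t = 𝒯_{T-t}(λ)`. -/
theorem krein_equation
    (a b : ℕ → ℝ) (ha0 : a 0 = 1) (hapos : ∀ n, 0 < a n)
    (lam : ℂ) (alpha beta : ℝ) (y : ℕ → ℂ)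
    (hy0 : y 0 = (alpha : ℂ)) (hy1 : y 1 = (beta : ℂ))
    (hy : ∀ k : ℕ, 1 ≤ k →
      (a k : ℂ) * y (k + 1) + (a (k - 1) : ℂ) * y (k - 1) + (b k : ℂ) * y k = lam * y k)
    (T : ℕ) :
    (∃! g : Fin T → ℂ, WFunC a b T g = fun n : Fin T => conj (y ((n : ℕ) + 1))) ∧
    (∀ g : Fin T → ℂ,
      (WFunC a b T g = fun n : Fin T => conj (y ((n : ℕ) + 1))) ↔
        (CMatC a b T).mulVec g
          = fun t : Fin T =>
              (beta : ℂ) * conj (chebC lam (T - (t : ℕ)))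
                - (alpha : ℂ) *
                  ((RMatC a b T)ᴴ.mulVec (fun u : Fin T => conj (chebC lam (T - (u : ℕ))))) t) := by
  classical
  have hdet : (WMatC a b T).det ≠ 0 := KreinAux.WMatC_det_ne_zero a b hapos T
  have hunit : IsUnit (WMatC a b T).det := isUnit_iff_ne_zero.mpr hdet
  have hdetH : ((WMatC a b T)ᴴ).det ≠ 0 := by
    rw [Matrix.det_conjTranspose]; exact star_ne_zero.mpr hdet
  have hunitH : IsUnit ((WMatC a b T)ᴴ).det := isUnit_iff_ne_zero.mpr hdetH
  have hmul : ∀ g : Fin T → ℂ, WFunC a b T g = (WMatC a b T).mulVec g :=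
    fun g => KreinAux.WFunC_mulVec a b T g
  have hinj : Function.Injective (WMatC a b T).mulVec := by
    intro g1 g2 h
    have h2 := congrArg ((WMatC a b T)⁻¹.mulVec) h
    rwa [Matrix.mulVec_mulVec, Matrix.mulVec_mulVec, Matrix.nonsing_inv_mul _ hunit,
      Matrix.one_mulVec, Matrix.one_mulVec] at h2
  have hinjH : Function.Injective ((WMatC a b T)ᴴ).mulVec := by
    intro g1 g2 h
    have h2 := congrArg (((WMatC a b T)ᴴ)⁻¹.mulVec) h
    rwa [Matrix.mulVec_mulVec, Matrix.mulVec_mulVec, Matrix.nonsing_inv_mul _ hunitH,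
      Matrix.one_mulVec, Matrix.one_mulVec] at h2
  have hws := KreinAux.wstar_identity a b ha0 lam alpha beta y hy0 hy1 hy T
  constructor
  · refine ⟨(WMatC a b T)⁻¹.mulVec (fun n : Fin T => conj (y ((n : ℕ) + 1))), ?_, ?_⟩
    · beta_reduce
      rw [hmul, Matrix.mulVec_mulVec, Matrix.mul_nonsing_inv _ hunit, Matrix.one_mulVec]
    · intro g hg
      apply hinj
      rw [← hmul g, hg, Matrix.mulVec_mulVec, Matrix.mul_nonsing_inv _ hunit,
        Matrix.one_mulVec]
  · intro g
    rw [hmul g]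
    have hC : (CMatC a b T).mulVec g
        = ((WMatC a b T)ᴴ).mulVec ((WMatC a b T).mulVec g) := by
      rw [Matrix.mulVec_mulVec]; rfl
    constructor
    · intro hg
      rw [hC, hg, hws]
    · intro hg
      apply hinjH
      rw [← hC, hg, ← hws]
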